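/- Let F be a field of characteristic 0 or of characteristic p ≠ 2, let V be a 3-dimensional F-vector space with basis e₁, e₂, e₃, and let R = Λ(V) be the exterior algebra of V. Then the center C(R) of R is not a subdirectly indecomposable ring: the ideals of C(R) generated by e₁∧e₂ and by e₁∧e₂∧e₃ are nonzero and have zero intersection. -/

import Mathlib

open ExteriorAlgebra

section Aux
variable {F : Type*} [Field F] {V : Type*} [AddCommGroup V] [Module F V]

private lemma swap_ι (x y : V) : ι F x * ι F y = -(ι F y * ι F x) := by
  rw [eq_neg_iff_add_eq_zero, ι_add_mul_swap]

private lemma ι_supercomm (x : ExteriorAlgebra F V) (v : V) :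
    ι F v * x = CliffordAlgebra.involute x * ι F v := by
  induction x using ExteriorAlgebra.induction with
  | algebraMap r => rw [AlgHom.commutes, Algebra.commutes]
  | ι m => rw [CliffordAlgebra.involute_ι, swap_ι, neg_mul]
  | mul x y hx hy => rw [map_mul, ← mul_assoc, hx, mul_assoc, hy, ← mul_assoc]
  | add x y hx hy => rw [mul_add, hx, hy, map_add, add_mul]

variable (e : Module.Basis (Fin 3) F V)

private lemma ι_mul_w (v : V) :
    ι F v * (ι F (e 0) * ι F (e 1) * ι F (e 2)) = 0 := by
  have key : (LinearMap.mulRight F (ι F (e 0) * ι F (e 1) * ι F (e 2))).comp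
      (ι F (M := V)) = 0 := by
    refine e.ext fun i => ?_
    simp only [LinearMap.comp_apply, LinearMap.mulRight_apply, LinearMap.zero_apply]
    set a := ι F (e 0); set b := ι F (e 1); set c := ι F (e 2)
    have ha : a * a = 0 := ι_sq_zero _
    have hb : b * b = 0 := ι_sq_zero _
    have hc : c * c = 0 := ι_sq_zero _
    fin_cases i
    · calc a * (a * b * c) = (a * a) * (b * c) := by noncomm_ring
        _ = 0 := by rw [ha, zero_mul]
    · have h1 : b * a = -(a * b) := swap_ι _ _
      calc b * (a * b * c) = (b * a) * (b * c) := by noncomm_ring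
        _ = (-(a * b)) * (b * c) := by rw [h1]
        _ = -(a * ((b * b) * c)) := by noncomm_ring
        _ = 0 := by rw [hb, zero_mul, mul_zero, neg_zero]
    · have h1 : c * a = -(a * c) := swap_ι _ _
      have h2 : c * b = -(b * c) := swap_ι _ _
      calc c * (a * b * c) = ((c * a) * b) * c := by noncomm_ring
        _ = ((-(a * c)) * b) * c := by rw [h1]
        _ = -(a * ((c * b) * c)) := by noncomm_ring
        _ = -(a * ((-(b * c)) * c)) := by rw [h2]
        _ = a * (b * (c * c)) := by noncomm_ring
        _ = 0 := by rw [hc, mul_zero, mul_zero]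
  have := LinearMap.congr_fun key v
  simpa [mul_assoc] using this

private lemma involute_w :
    CliffordAlgebra.involute (ι F (e 0) * ι F (e 1) * ι F (e 2)) =
      -(ι F (e 0) * ι F (e 1) * ι F (e 2)) := by
  rw [map_mul, map_mul, CliffordAlgebra.involute_ι, CliffordAlgebra.involute_ι,
    CliffordAlgebra.involute_ι, neg_mul_neg, mul_neg]

private lemma w_mul_ι (v : V) :
    (ι F (e 0) * ι F (e 1) * ι F (e 2)) * ι F v = 0 := by
  have h := ι_supercomm (F := F) (ι F (e 0) * ι F (e 1) * ι F (e 2)) v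
  rw [ι_mul_w e v, involute_w e, neg_mul] at h
  exact neg_eq_zero.mp h.symm

private lemma involute_u :
    CliffordAlgebra.involute (ι F (e 0) * ι F (e 1)) = ι F (e 0) * ι F (e 1) := by
  rw [map_mul, CliffordAlgebra.involute_ι, CliffordAlgebra.involute_ι, neg_mul_neg]

private lemma u_center :
    ι F (e 0) * ι F (e 1) ∈ Subring.center (ExteriorAlgebra F V) := by
  rw [Subring.mem_center_iff]
  intro g
  induction g using ExteriorAlgebra.induction with
  | algebraMap r => rw [Algebra.commutes]
  | ι m => rw [ι_supercomm, involute_u]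
  | mul x y hx hy => rw [mul_assoc, hy, ← mul_assoc, hx, mul_assoc]
  | add x y hx hy => rw [add_mul, mul_add, hx, hy]

private lemma w_center :
    ι F (e 0) * ι F (e 1) * ι F (e 2) ∈ Subring.center (ExteriorAlgebra F V) := by
  rw [Subring.mem_center_iff]
  intro g
  induction g using ExteriorAlgebra.induction with
  | algebraMap r => rw [Algebra.commutes]
  | ι m => rw [ι_mul_w, w_mul_ι]
  | mul x y hx hy => rw [mul_assoc, hy, ← mul_assoc, hx, mul_assoc]
  | add x y hx hy => rw [add_mul, mul_add, hx, hy]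

private lemma mul_w_eq (x : ExteriorAlgebra F V) :
    x * (ι F (e 0) * ι F (e 1) * ι F (e 2)) =
      algebraMapInv x • (ι F (e 0) * ι F (e 1) * ι F (e 2)) := by
  induction x using ExteriorAlgebra.induction with
  | algebraMap r =>
      rw [show (algebraMapInv (algebraMap F (ExteriorAlgebra F V) r) : F) = r from
        ExteriorAlgebra.algebraMap_leftInverse V r, Algebra.smul_def]
  | ι m =>
      rw [ι_mul_w, show (algebraMapInv (ι F m) : F) = 0 by
        simp [algebraMapInv, lift_ι_apply], zero_smul]
  | mul x y hx hy =>
      rw [map_mul, mul_assoc, hy, mul_smul_comm, hx, smul_smul, mul_comm]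
  | add x y hx hy => rw [add_mul, hx, hy, map_add, add_smul]

private noncomputable def phi3 : ExteriorAlgebra F V →ₗ[F] F :=
  liftAlternating (Function.update (fun i => (0 : V [⋀^Fin i]→ₗ[F] F)) 3 e.det)

private lemma w_eq_ιMulti :
    ι F (e 0) * ι F (e 1) * ι F (e 2) = ιMulti F 3 ![e 0, e 1, e 2] := by
  rw [ιMulti_apply]
  simp [List.ofFn_succ, mul_assoc]

private lemma phi3_w : phi3 e (ι F (e 0) * ι F (e 1) * ι F (e 2)) = 1 := by
  rw [w_eq_ιMulti, phi3, liftAlternating_apply_ιMulti, Function.update_self]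
  have : ![e 0, e 1, e 2] = ⇑e := by
    funext i; fin_cases i <;> rfl
  rw [this, Module.Basis.det_self]

private lemma w_ne_zero : ι F (e 0) * ι F (e 1) * ι F (e 2) ≠ 0 := by
  intro h
  have := phi3_w e
  rw [h, map_zero] at this
  exact zero_ne_one this

end Aux

/-- The center of the exterior algebra `R` of a 3-dimensional vector space (with basis
`e₀, e₁, e₂`) over a field of characteristic `0` or `p ≠ 2` is not subdirectly
indecomposable: `e₀ ∧ e₁` and `e₀ ∧ e₁ ∧ e₂` are central, and the ideals of the center
they generate are nonzero with zero intersection; consequently the infimum of all nonzero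
ideals of the center is zero. -/
theorem exteriorAlgebra_dim_three_center_not_subdirectlyIndecomposable
    (F : Type*) [Field F] (V : Type*) [AddCommGroup V] [Module F V]
    (hchar : ringChar F ≠ 2)
    (e : Module.Basis (Fin 3) F V) :
    ∃ (hu : ExteriorAlgebra.ι F (e 0) * ExteriorAlgebra.ι F (e 1) ∈
        Subring.center (ExteriorAlgebra F V))
      (hw : ExteriorAlgebra.ι F (e 0) * ExteriorAlgebra.ι F (e 1) *
          ExteriorAlgebra.ι F (e 2) ∈ Subring.center (ExteriorAlgebra F V)),
      Ideal.span {(⟨_, hu⟩ : Subring.center (ExteriorAlgebra F V))} ≠ ⊥ ∧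
      Ideal.span {(⟨_, hw⟩ : Subring.center (ExteriorAlgebra F V))} ≠ ⊥ ∧
      Ideal.span {(⟨_, hu⟩ : Subring.center (ExteriorAlgebra F V))} ⊓
        Ideal.span {(⟨_, hw⟩ : Subring.center (ExteriorAlgebra F V))} = ⊥ ∧
      sInf {I : Ideal (Subring.center (ExteriorAlgebra F V)) | I ≠ ⊥} = ⊥ := by
  set u : ExteriorAlgebra F V := ι F (e 0) * ι F (e 1) with hu_def
  set w : ExteriorAlgebra F V := ι F (e 0) * ι F (e 1) * ι F (e 2) with hw_def
  have hwne : w ≠ 0 := w_ne_zero e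
  have hune : u ≠ 0 := by
    intro h
    exact hwne (by rw [hw_def, ← hu_def, h, zero_mul])
  have h2 : (2 : F) ≠ 0 := Ring.two_ne_zero hchar
  have hu : u ∈ Subring.center (ExteriorAlgebra F V) := u_center e
  have hw : w ∈ Subring.center (ExteriorAlgebra F V) := w_center e
  have hU : Ideal.span {(⟨u, hu⟩ : Subring.center (ExteriorAlgebra F V))} ≠ ⊥ := by
    rw [Ne, Ideal.span_singleton_eq_bot]
    intro h
    exact hune (congrArg Subtype.val h)
  have hW : Ideal.span {(⟨w, hw⟩ : Subring.center (ExteriorAlgebra F V))} ≠ ⊥ := by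
    rw [Ne, Ideal.span_singleton_eq_bot]
    intro h
    exact hwne (congrArg Subtype.val h)
  have hI : Ideal.span {(⟨u, hu⟩ : Subring.center (ExteriorAlgebra F V))} ⊓
      Ideal.span {(⟨w, hw⟩ : Subring.center (ExteriorAlgebra F V))} = ⊥ := by
    rw [eq_bot_iff]
    intro z hz
    obtain ⟨hz1, hz2⟩ := Ideal.mem_inf.mp hz
    obtain ⟨a, ha⟩ := Ideal.mem_span_singleton'.mp hz1
    obtain ⟨b, hb⟩ := Ideal.mem_span_singleton'.mp hz2
    have haval : (a : ExteriorAlgebra F V) * u = (z : ExteriorAlgebra F V) :=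
      congrArg Subtype.val ha
    have hbval : (b : ExteriorAlgebra F V) * w = (z : ExteriorAlgebra F V) :=
      congrArg Subtype.val hb
    set c : F := algebraMapInv (b : ExteriorAlgebra F V) with hc_def
    have hzc : (z : ExteriorAlgebra F V) = c • w := by
      rw [← hbval, mul_w_eq e]
    -- involute of z
    have hinvz : CliffordAlgebra.involute ((a : ExteriorAlgebra F V)) * u = -(c • w) := by
      have := congrArg (CliffordAlgebra.involute (Q := (0 : QuadraticForm F V))) haval
      rw [map_mul, hu_def, involute_u, ← hu_def, hzc, map_smul, hw_def, involute_w,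
        ← hw_def, smul_neg] at this
      exact this
    -- central elements minus their involute annihilate the ι's
    have hkill : ∀ v : V, ((a : ExteriorAlgebra F V) -
        CliffordAlgebra.involute ((a : ExteriorAlgebra F V))) * ι F v = 0 := by
      intro v
      have h1 : ι F v * (a : ExteriorAlgebra F V) =
          (a : ExteriorAlgebra F V) * ι F v := Subring.mem_center_iff.mp a.2 (ι F v)
      have h2 := ι_supercomm ((a : ExteriorAlgebra F V)) v
      rw [sub_mul, ← h2, h1, sub_self]
    have hdiff : ((a : ExteriorAlgebra F V) -
        CliffordAlgebra.involute ((a : ExteriorAlgebra F V))) * u = 0 := by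
      rw [hu_def, ← mul_assoc, hkill (e 0), zero_mul]
    rw [sub_mul, haval, hinvz, hzc, sub_neg_eq_add, ← two_smul F, smul_smul] at hdiff
    have hc0 : c = 0 := by
      by_contra hc
      have hne : (2 : F) * c ≠ 0 := mul_ne_zero h2 hc
      have : w = ((2 : F) * c)⁻¹ • (((2 : F) * c) • w) := by
        rw [smul_smul, inv_mul_cancel₀ hne, one_smul]
      rw [hdiff, smul_zero] at this
      exact hwne this
    have : (z : ExteriorAlgebra F V) = 0 := by rw [hzc, hc0, zero_smul]
    exact (Ideal.mem_bot).mpr (Subtype.ext this)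
  refine ⟨hu, hw, hU, hW, hI, ?_⟩
  refine le_antisymm ?_ bot_le
  exact le_trans (le_inf (sInf_le hU) (sInf_le hW)) hI.le
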